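/- Let k ≥ 3 be an odd integer, L ≥ 3 an integer, and define c(k) = ∏_{j=1}^{(k−1)/2} sin²(2πj/k). Let n be a positive integer with n > 2^{1/(L−1)} · c(k)^{−1/(L−1)}. Let S = {a₁ < a₂ < ... < a_m} be a set of positive integers with property D_k(−n), with m ≥ 14 and n^L < a₁. For each i with 3 ≤ i ≤ m, let u_i and v_i be the positive integers with u_i^k = a₁a_i − n and v_i^k = a₂a_i − n. Then for every i with 14 ≤ i ≤ m, one has v_i > a₂^4 and |u_i/v_i − (a₁/a₂)^{1/k}| < 1/v_i^{k−1/2}, where (a₁/a₂)^{1/k} denotes the positive real k-th root of a₁/a₂. -/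

import Mathlib

private lemma pow_gap {A B : ℤ} {k : ℕ} (hk : 1 ≤ k) (hA : 0 ≤ A) (hAB : A + 1 ≤ B) :
    A ^ (k - 1) ≤ B ^ k - A ^ k := by
  have hB : (0:ℤ) ≤ B := by linarith
  have h1 : A ^ (k-1) ≤ B ^ (k-1) := pow_le_pow_left₀ hA (by linarith) _
  have h2 : B ^ k = B ^ (k-1) * B := by
    rw [← pow_succ]; congr 1; omega
  have h3 : A ^ k = A ^ (k-1) * A := by
    rw [← pow_succ]; congr 1; omega
  have h4 : A ^ (k-1) * (A + 1) ≤ B ^ (k-1) * B :=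
    mul_le_mul h1 hAB (by positivity) (by positivity)
  nlinarith [h4]

set_option maxHeartbeats 2000000

/-- Let k ≥ 3 be odd, L ≥ 3, c(k) = ∏_{j=1}^{(k−1)/2} sin²(2πj/k), and
let n be a positive integer with n > 2^{1/(L−1)}·c(k)^{−1/(L−1)}. Let
a₁ < a₂ < ... < a_m be positive integers with property D_k(−n), m ≥ 14, n^L < a₁, and
for 3 ≤ i ≤ m let u_i, v_i be the positive integers with u_i^k = a₁a_i − n and
v_i^k = a₂a_i − n. Then for 14 ≤ i ≤ m we have v_i > a₂^4 and
|u_i/v_i − (a₁/a₂)^{1/k}| < 1/v_i^{k−1/2}. -/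
theorem stmt_11 (k L m n : ℕ) (hk : 3 ≤ k) (hodd : Odd k) (hL : 3 ≤ L)
    (hm : 14 ≤ m) (hn : 0 < n)
    (hn2 : (2 : ℝ) ^ ((1 : ℝ) / ((L : ℝ) - 1)) *
      (∏ j ∈ Finset.Icc 1 ((k - 1) / 2),
        Real.sin (2 * Real.pi * (j : ℝ) / (k : ℝ)) ^ 2) ^ (-(1 : ℝ) / ((L : ℝ) - 1))
      < (n : ℝ))
    (a u v : ℕ → ℕ)
    (hpos : ∀ i, 1 ≤ i → i ≤ m → 0 < a i)
    (hmono : ∀ i j, 1 ≤ i → i < j → j ≤ m → a i < a j)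
    (hfirst : n ^ L < a 1)
    (hD : ∀ i j, 1 ≤ i → i < j → j ≤ m →
      ∃ c : ℕ, (a i * a j : ℤ) - n = (c : ℤ) ^ k)
    (huv : ∀ i, 3 ≤ i → i ≤ m → 0 < u i ∧ 0 < v i ∧
      ((u i : ℤ)) ^ k = (a 1 * a i : ℤ) - n ∧ ((v i : ℤ)) ^ k = (a 2 * a i : ℤ) - n) :
    ∀ i, 14 ≤ i → i ≤ m →
      ((a 2 : ℝ)) ^ 4 < (v i : ℝ) ∧
      |(u i : ℝ) / (v i : ℝ) - ((a 1 : ℝ) / (a 2 : ℝ)) ^ ((1 : ℝ) / (k : ℝ))| <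
        1 / (v i : ℝ) ^ ((k : ℝ) - 1 / 2) := by
  have hk1 : 1 ≤ k := by omega
  have hk0 : k ≠ 0 := by omega
  -- Step 1 : n ≥ 2
  have hn1 : 2 ≤ n := by
    set c := (∏ j ∈ Finset.Icc 1 ((k - 1) / 2),
        Real.sin (2 * Real.pi * (j : ℝ) / (k : ℝ)) ^ 2) with hc
    have hkR : (0:ℝ) < (k:ℝ) := by positivity
    have hcpos : 0 < c := by
      apply Finset.prod_pos
      intro j hj
      simp only [Finset.mem_Icc] at hj
      have hj1 : 1 ≤ j := hj.1
      have hj2 : 2 * j < k := by omega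
      have h1 : 0 < 2 * Real.pi * (j:ℝ) / (k:ℝ) := by
        have : (0:ℝ) < (j:ℝ) := by exact_mod_cast hj1
        positivity
      have h2 : 2 * Real.pi * (j:ℝ) / (k:ℝ) < Real.pi := by
        rw [div_lt_iff₀ hkR]
        have h2j : (2 * (j:ℝ)) < (k:ℝ) := by exact_mod_cast hj2
        nlinarith [Real.pi_pos]
      have := Real.sin_pos_of_pos_of_lt_pi h1 h2
      positivity
    have hcle : c ≤ 1 := by
      apply Finset.prod_le_one
      · intro j _; positivity
      · intro j _; exact Real.sin_sq_le_one _
    have hLR : (0:ℝ) < (L:ℝ) - 1 := by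
      have : (3:ℝ) ≤ (L:ℝ) := by exact_mod_cast hL
      linarith
    have h2e : (1:ℝ) < (2:ℝ) ^ ((1:ℝ) / ((L:ℝ) - 1)) := by
      apply Real.one_lt_rpow_iff_of_pos (by norm_num) |>.2
      exact Or.inl ⟨by norm_num, by positivity⟩
    have hce : (1:ℝ) ≤ c ^ (-(1:ℝ) / ((L:ℝ) - 1)) := by
      rw [neg_div, Real.rpow_neg hcpos.le]
      exact (one_le_inv₀ (Real.rpow_pos_of_pos hcpos _)).2
        (Real.rpow_le_one hcpos.le hcle (by positivity))
    have hgt1 : (1:ℝ) < (n:ℝ) := by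
      have h0 : (0:ℝ) < (2:ℝ) ^ ((1:ℝ) / ((L:ℝ) - 1)) := by positivity
      nlinarith [hn2]
    have : 1 < n := by exact_mod_cast hgt1
    omega
  -- n < a 1
  have hn3L : n ^ 3 ≤ n ^ L := Nat.pow_le_pow_right (by omega) hL
  have hna : n < a 1 := by
    have : n < n ^ L := by
      calc n = n ^ 1 := (pow_one n).symm
      _ < n ^ L := Nat.pow_lt_pow_right (by omega) (by omega)
    omega
  have hmono' : ∀ i j, 1 ≤ i → i ≤ j → j ≤ m → a i ≤ a j := by
    intro i j h1 h2 h3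
    rcases h2.eq_or_lt with rfl | h
    · exact le_rfl
    · exact (hmono i j h1 h h3).le
  have haZ : ∀ i, 1 ≤ i → i ≤ m → (n:ℤ) < a i := by
    intro i h1 h2
    have h := hmono' 1 i le_rfl h1 h2
    have : n < a i := lt_of_lt_of_le hna h
    exact_mod_cast this
  have haP : ∀ i, 1 ≤ i → i ≤ m → (0:ℤ) < a i := by
    intro i h1 h2
    have := hpos i h1 h2
    exact_mod_cast this
  -- Gap lemma
  have gap : ∀ p q r s : ℕ, 1 ≤ p → p < q → q < r → r < s → s ≤ m →
      ∀ x y : ℕ, (x:ℤ) ^ k = (a p : ℤ) * (a r) - n → (y:ℤ) ^ k = (a q : ℤ) * (a s) - n →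
      (x:ℤ) ^ (k-1) ≤ (n:ℤ) * y := by
    intro p q r s hp hpq hqr hrs hsm x y hx hy
    obtain ⟨w1, hw1⟩ := hD p s (by omega) (by omega) hsm
    obtain ⟨w2, hw2⟩ := hD q r (by omega) (by omega) (by omega)
    have hw1' : ((w1:ℤ)) ^ k = (a p : ℤ) * (a s) - n := by push_cast at hw1 ⊢; linarith
    have hw2' : ((w2:ℤ)) ^ k = (a q : ℤ) * (a r) - n := by push_cast at hw2 ⊢; linarith
    set A : ℤ := (x:ℤ) * y with hA
    set B : ℤ := (w1:ℤ) * w2 with hB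
    have e1 : B ^ k = ((a p:ℤ) * (a s) - n) * ((a q:ℤ) * (a r) - n) := by
      rw [hB, mul_pow, hw1', hw2']
    have e2 : A ^ k = ((a p:ℤ) * (a r) - n) * ((a q:ℤ) * (a s) - n) := by
      rw [hA, mul_pow, hx, hy]
    have key : B ^ k - A ^ k = (n:ℤ) * (((a q:ℤ) - a p) * ((a s:ℤ) - a r)) := by
      rw [e1, e2]; ring
    have hqp : (a p:ℤ) < a q := by exact_mod_cast hmono p q hp hpq (by omega)
    have hsr : (a r:ℤ) < a s := by exact_mod_cast hmono r s (by omega) hrs hsm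
    have hnZ : (0:ℤ) < n := by exact_mod_cast hn
    have hkeypos : 0 < B ^ k - A ^ k := by
      rw [key]
      exact mul_pos hnZ (mul_pos (by linarith) (by linarith))
    have hApos : (0:ℤ) ≤ A := by positivity
    have hAB : A < B := by
      refine lt_of_pow_lt_pow_left₀ k (by positivity) ?_
      linarith
    have h1 : A ^ (k-1) ≤ B ^ k - A ^ k := pow_gap hk1 hApos (by linarith)
    have hr1 : (1:ℤ) ≤ a r := haP r (by omega) (by omega)
    have hnq : (n:ℤ) < a q := haZ q (by omega) (by omega)
    have hp0 : (0:ℤ) < a p := haP p (by omega) (by omega)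
    have hs1 : (1:ℤ) ≤ a s := haP s (by omega) (by omega)
    have h2 : ((a q:ℤ) - a p) * ((a s:ℤ) - a r) ≤ (a q:ℤ) * (a s) - n := by
      have hqr1 : (a q:ℤ) ≤ (a q) * (a r) := le_mul_of_one_le_right (by linarith) hr1
      have h5 : (a p:ℤ) * (a r) ≤ (a p:ℤ) * (a s) := mul_le_mul_of_nonneg_left hsr.le hp0.le
      have expand : ((a q:ℤ) - a p) * ((a s:ℤ) - a r)
          = (a q:ℤ) * (a s) - (a q:ℤ) * (a r) - (a p:ℤ) * (a s) + (a p:ℤ) * (a r) := by ring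
      rw [expand]
      linarith
    have hyk : (0:ℤ) < (y:ℤ) ^ k := by
      rw [hy]
      have hqs1 : (a q:ℤ) ≤ (a q) * (a s) := le_mul_of_one_le_right (by linarith) hs1
      linarith
    have hy0 : (0:ℤ) < (y:ℤ) := by
      rcases Nat.eq_zero_or_pos y with h | h
      · exfalso; rw [h] at hyk; simp [hk0] at hyk
      · exact_mod_cast h
    have h6 : A ^ (k-1) ≤ (n:ℤ) * (y:ℤ) ^ k := by
      calc A ^ (k-1) ≤ B ^ k - A ^ k := h1
      _ = (n:ℤ) * (((a q:ℤ) - a p) * ((a s:ℤ) - a r)) := key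
      _ ≤ (n:ℤ) * ((a q:ℤ) * (a s) - n) := mul_le_mul_of_nonneg_left h2 (by positivity)
      _ = (n:ℤ) * (y:ℤ) ^ k := by rw [hy]
    have h7 : (x:ℤ) ^ (k-1) * (y:ℤ) ^ (k-1) ≤ ((n:ℤ) * y) * (y:ℤ) ^ (k-1) := by
      have e3 : A ^ (k-1) = (x:ℤ) ^ (k-1) * (y:ℤ) ^ (k-1) := by rw [hA, mul_pow]
      have e5 : (y:ℤ) ^ k = (y:ℤ) * (y:ℤ) ^ (k-1) := by
        conv_lhs => rw [show k = (k-1)+1 by omega]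
        rw [pow_succ]; ring
      have e4 : (n:ℤ) * (y:ℤ) ^ k = ((n:ℤ) * y) * (y:ℤ) ^ (k-1) := by
        rw [e5]; ring
      rw [← e3, ← e4]
      exact h6
    exact le_of_mul_le_mul_right h7 (pow_pos hy0 _)
  -- get ℤ-level facts
  have hnZ : (0:ℤ) < n := by exact_mod_cast hn
  have hnZ1 : (1:ℤ) ≤ n := by exact_mod_cast hn
  have hn3a1 : (n:ℤ)^3 < a 1 := by
    have : n^3 < a 1 := lt_of_le_of_lt hn3L hfirst
    exact_mod_cast this
  have ha2Z : (1:ℤ) ≤ a 2 := haP 2 (by omega) (by omega)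
  have hn3a2 : (n:ℤ)^3 < a 2 := by
    have h12 : (a 1:ℤ) < a 2 := by exact_mod_cast hmono 1 2 (by omega) (by omega) (by omega)
    linarith
  -- The chain of gap estimates
  have chain : ∀ t : ℕ, t ≤ 8 → ∀ x : ℕ, (x:ℤ)^k = (a (3+t):ℤ) * (a (5+t)) - n →
      (a 2:ℤ)^((k-1)^t) * (n:ℤ)^3 ≤ (x:ℤ)^k := by
    intro t
    induction t with
    | zero =>
      intro _ x hx
      norm_num at hx
      rw [hx, pow_zero, pow_one]
      have h23 : (a 2:ℤ) < a 3 := by exact_mod_cast hmono 2 3 (by omega) (by omega) (by omega)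
      have h35 : (a 3:ℤ) < a 5 := by exact_mod_cast hmono 3 5 (by omega) (by omega) (by omega)
      have hna2 : (n:ℤ) < a 2 := haZ 2 (by omega) (by omega)
      have hp : ((a 2:ℤ) + 1) * ((a 2:ℤ) + 2) ≤ (a 3:ℤ) * (a 5) :=
        mul_le_mul (by linarith) (by linarith) (by linarith) (by linarith)
      have hsq : (a 2:ℤ) * ((n:ℤ)^3 + 1) ≤ (a 2:ℤ) * (a 2:ℤ) :=
        mul_le_mul_of_nonneg_left (by linarith) (by linarith)
      nlinarith
    | succ t ih =>
      intro ht x hx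
      have hx' : (x:ℤ)^k = (a (4+t):ℤ) * (a (6+t)) - n := by
        have e1 : 3 + (t+1) = 4 + t := by omega
        have e2 : 5 + (t+1) = 6 + t := by omega
        rw [e1, e2] at hx; exact hx
      obtain ⟨z, hz⟩ := hD (3+t) (5+t) (by omega) (by omega) (by omega)
      have hz' : (z:ℤ)^k = (a (3+t):ℤ) * (a (5+t)) - n := hz.symm
      have hih := ih (by omega) z hz'
      have hgap := gap (3+t) (4+t) (5+t) (6+t) (by omega) (by omega) (by omega) (by omega)
        (by omega) z x hz' hx'
      have hzk : (0:ℤ) ≤ (z:ℤ)^(k-1) := by positivity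
      have s1 : ((z:ℤ)^(k-1))^k ≤ ((n:ℤ) * x)^k := pow_le_pow_left₀ hzk hgap k
      have s2 : ((z:ℤ)^k)^(k-1) ≤ (n:ℤ)^k * (x:ℤ)^k := by
        calc ((z:ℤ)^k)^(k-1) = (z:ℤ)^(k * (k-1)) := (pow_mul _ _ _).symm
        _ = (z:ℤ)^((k-1) * k) := by rw [mul_comm]
        _ = ((z:ℤ)^(k-1))^k := pow_mul _ _ _
        _ ≤ ((n:ℤ) * x)^k := s1
        _ = (n:ℤ)^k * (x:ℤ)^k := mul_pow _ _ _
      have s3 : ((a 2:ℤ)^((k-1)^t) * (n:ℤ)^3)^(k-1) ≤ ((z:ℤ)^k)^(k-1) :=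
        pow_le_pow_left₀ (by positivity) hih _
      have s4 : ((a 2:ℤ)^((k-1)^t) * (n:ℤ)^3)^(k-1)
          = (a 2:ℤ)^((k-1)^(t+1)) * (n:ℤ)^(3*(k-1)) := by
        rw [mul_pow, ← pow_mul, ← pow_mul, ← pow_succ]
      have s5 : (a 2:ℤ)^((k-1)^(t+1)) * (n:ℤ)^3 * (n:ℤ)^k
          ≤ (a 2:ℤ)^((k-1)^(t+1)) * (n:ℤ)^(3*(k-1)) := by
        rw [mul_assoc, ← pow_add]
        exact mul_le_mul_of_nonneg_left (pow_le_pow_right₀ hnZ1 (by omega)) (by positivity)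
      have s6 : (a 2:ℤ)^((k-1)^(t+1)) * (n:ℤ)^3 * (n:ℤ)^k ≤ (x:ℤ)^k * (n:ℤ)^k := by
        rw [s4] at s3
        calc (a 2:ℤ)^((k-1)^(t+1)) * (n:ℤ)^3 * (n:ℤ)^k
            ≤ (a 2:ℤ)^((k-1)^(t+1)) * (n:ℤ)^(3*(k-1)) := s5
        _ ≤ ((z:ℤ)^k)^(k-1) := s3
        _ ≤ (n:ℤ)^k * (x:ℤ)^k := s2
        _ = (x:ℤ)^k * (n:ℤ)^k := by ring
      exact le_of_mul_le_mul_right s6 (by positivity)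
  -- a 14 is huge
  have ha14 : (a 2:ℤ)^(4*k+1) < a 14 := by
    obtain ⟨z11, hz11⟩ := hD 11 13 (by omega) (by omega) (by omega)
    have hz11' : (z11:ℤ)^k = (a 11:ℤ) * (a 13) - n := hz11.symm
    have hz11'' : (z11:ℤ)^k = (a (3+8):ℤ) * (a (5+8)) - n := by norm_num; exact hz11'
    have hc11 := chain 8 le_rfl z11 hz11''
    obtain ⟨w, hw⟩ := hD 12 14 (by omega) (by omega) (by omega)
    have hw' : (w:ℤ)^k = (a 12:ℤ) * (a 14) - n := hw.symm
    have hgapf := gap 11 12 13 14 (by omega) (by omega) (by omega) (by omega) (by omega)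
      z11 w hz11' hw'
    have s2 : ((z11:ℤ)^k)^(k-1) ≤ (n:ℤ)^k * (w:ℤ)^k := by
      calc ((z11:ℤ)^k)^(k-1) = (z11:ℤ)^(k * (k-1)) := (pow_mul _ _ _).symm
      _ = (z11:ℤ)^((k-1) * k) := by rw [mul_comm]
      _ = ((z11:ℤ)^(k-1))^k := pow_mul _ _ _
      _ ≤ ((n:ℤ) * w)^k := pow_le_pow_left₀ (by positivity) hgapf k
      _ = (n:ℤ)^k * (w:ℤ)^k := mul_pow _ _ _
    have s3 : ((a 2:ℤ)^((k-1)^8) * (n:ℤ)^3)^(k-1) ≤ ((z11:ℤ)^k)^(k-1) :=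
      pow_le_pow_left₀ (by positivity) hc11 _
    have s4 : ((a 2:ℤ)^((k-1)^8) * (n:ℤ)^3)^(k-1)
        = (a 2:ℤ)^((k-1)^9) * (n:ℤ)^(3*(k-1)) := by
      rw [mul_pow, ← pow_mul, ← pow_mul, ← pow_succ]
    have s5 : (a 2:ℤ)^((k-1)^9) * (n:ℤ)^k ≤ (a 2:ℤ)^((k-1)^9) * (n:ℤ)^(3*(k-1)) :=
      mul_le_mul_of_nonneg_left (pow_le_pow_right₀ hnZ1 (by omega)) (by positivity)
    have s6 : (a 2:ℤ)^((k-1)^9) * (n:ℤ)^k ≤ (w:ℤ)^k * (n:ℤ)^k := by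
      rw [s4] at s3
      calc (a 2:ℤ)^((k-1)^9) * (n:ℤ)^k ≤ (a 2:ℤ)^((k-1)^9) * (n:ℤ)^(3*(k-1)) := s5
      _ ≤ ((z11:ℤ)^k)^(k-1) := s3
      _ ≤ (n:ℤ)^k * (w:ℤ)^k := s2
      _ = (w:ℤ)^k * (n:ℤ)^k := by ring
    have s7 : (a 2:ℤ)^((k-1)^9) ≤ (w:ℤ)^k := le_of_mul_le_mul_right s6 (by positivity)
    have h1214 : (a 12:ℤ) < a 14 := by exact_mod_cast hmono 12 14 (by omega) (by omega) hm
    have ha14P : (0:ℤ) < a 14 := haP 14 (by omega) hm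
    have s8 : (w:ℤ)^k < (a 14:ℤ)^2 := by
      rw [hw', pow_two]
      have hmul : (a 12:ℤ) * a 14 ≤ (a 14:ℤ) * a 14 :=
        mul_le_mul_of_nonneg_right h1214.le ha14P.le
      linarith
    have hexp : 2*(4*k+1) ≤ (k-1)^9 := by
      have h256 : 2^8 * (k-1) ≤ (k-1)^8 * (k-1) :=
        Nat.mul_le_mul_right _ (Nat.pow_le_pow_left (by omega) 8)
      have h9 : (k-1)^9 = (k-1)^8 * (k-1) := pow_succ _ _
      have : (2:ℕ)^8 = 256 := by norm_num
      omega
    have s9 : ((a 2:ℤ)^(4*k+1))^2 ≤ (a 2:ℤ)^((k-1)^9) := by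
      rw [← pow_mul]
      exact pow_le_pow_right₀ ha2Z (by omega)
    have s10 : ((a 2:ℤ)^(4*k+1))^2 < (a 14:ℤ)^2 := lt_of_le_of_lt (le_trans s9 s7) s8
    exact lt_of_pow_lt_pow_left₀ 2 (by positivity) s10
  -- Main conclusion
  intro j hj14 hjm
  obtain ⟨huj, hvj, hue, hve⟩ := huv j (by omega) hjm
  have hue' : (u j:ℤ)^k = (a 1:ℤ) * (a j) - n := by push_cast at hue ⊢; exact hue
  have hve' : (v j:ℤ)^k = (a 2:ℤ) * (a j) - n := by push_cast at hve ⊢; exact hve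
  have hajm : (a 14:ℤ) ≤ a j := by
    exact_mod_cast hmono' 14 j (by omega) hj14 hjm
  have haj : (a 2:ℤ)^(4*k+1) < a j := lt_of_lt_of_le ha14 hajm
  have hnaj : (n:ℤ) < a j := haZ j (by omega) hjm
  have hajP : (0:ℤ) < a j := haP j (by omega) hjm
  have ha2Z2 : (2:ℤ) ≤ a 2 := by
    have h12 : (a 1:ℤ) < a 2 := by exact_mod_cast hmono 1 2 (by omega) (by omega) (by omega)
    have hna1 : (n:ℤ) < a 1 := haZ 1 (by omega) (by omega)
    linarith
  have hvZ : (0:ℤ) < v j := by exact_mod_cast hvj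
  have huZ : (0:ℤ) < u j := by exact_mod_cast huj
  -- Part 1
  have hv4 : (a 2:ℤ)^4 < v j := by
    have hvk_lb : ((a 2:ℤ)^4)^k < (v j:ℤ)^k := by
      rw [hve', ← pow_mul]
      have e1 : (a 2:ℤ)^(4*k) ≤ (a 2:ℤ)^(4*k+1) := pow_le_pow_right₀ ha2Z (by omega)
      have e2 : 2 * (a j:ℤ) ≤ (a 2:ℤ) * a j := mul_le_mul_of_nonneg_right ha2Z2 hajP.le
      linarith
    exact lt_of_pow_lt_pow_left₀ k hvZ.le hvk_lb
  have part1 : ((a 2:ℝ))^4 < (v j:ℝ) := by exact_mod_cast hv4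
  refine ⟨part1, ?_⟩
  -- Part 2 : integer inequality n^2 * v^(2k-3) < u^(2k-2)
  have hkey : (n:ℤ)^2 * (v j:ℤ)^(2*k-3) < (u j:ℤ)^(2*k-2) := by
    have hu_lb : (n:ℤ)^3 * a j ≤ (u j:ℤ)^k := by
      rw [hue']
      have h1 : (n:ℤ)^3 + 1 ≤ a 1 := by linarith [hn3a1]
      have h2 : ((n:ℤ)^3 + 1) * a j ≤ (a 1:ℤ) * a j := mul_le_mul_of_nonneg_right h1 hajP.le
      nlinarith
    have hv_ub : (v j:ℤ)^k ≤ (a 2:ℤ) * a j := by rw [hve']; linarith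
    have key2 : (a 2:ℤ)^(2*k-3) < (n:ℤ)^(4*k-6) * a j := by
      have e1 : (a 2:ℤ)^(2*k-3) ≤ (a 2:ℤ)^(4*k+1) := pow_le_pow_right₀ ha2Z (by omega)
      have e2 : (a j:ℤ) ≤ (n:ℤ)^(4*k-6) * a j :=
        le_mul_of_one_le_left hajP.le (one_le_pow₀ hnZ1)
      linarith
    have hmid : (n:ℤ)^(2*k) * ((a 2:ℤ) * (a j))^(2*k-3)
        < (n:ℤ)^(6*k-6) * (a j:ℤ)^(2*k-2) := by
      calc (n:ℤ)^(2*k) * ((a 2:ℤ) * (a j))^(2*k-3)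
          = (n:ℤ)^(2*k) * ((a 2:ℤ)^(2*k-3) * (a j:ℤ)^(2*k-3)) := by rw [mul_pow]
      _ < (n:ℤ)^(2*k) * (((n:ℤ)^(4*k-6) * a j) * (a j:ℤ)^(2*k-3)) := by
          apply mul_lt_mul_of_pos_left _ (by positivity)
          exact mul_lt_mul_of_pos_right key2 (by positivity)
      _ = (n:ℤ)^(6*k-6) * (a j:ℤ)^(2*k-2) := by
          rw [show 6*k-6 = 2*k + (4*k-6) by omega, show 2*k-2 = (2*k-3)+1 by omega,
            pow_add, pow_succ]
          ring
    have hL1 : ((n:ℤ)^2 * (v j:ℤ)^(2*k-3))^k = (n:ℤ)^(2*k) * ((v j:ℤ)^k)^(2*k-3) := by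
      rw [mul_pow, ← pow_mul, ← pow_mul, mul_comm (2*k-3) k, pow_mul, pow_mul]
    have hR1 : ((u j:ℤ)^(2*k-2))^k = ((u j:ℤ)^k)^(2*k-2) := by
      rw [← pow_mul, mul_comm, pow_mul]
    have step : ((n:ℤ)^2 * (v j:ℤ)^(2*k-3))^k < ((u j:ℤ)^(2*k-2))^k := by
      rw [hL1, hR1]
      calc (n:ℤ)^(2*k) * ((v j:ℤ)^k)^(2*k-3)
          ≤ (n:ℤ)^(2*k) * ((a 2:ℤ) * a j)^(2*k-3) :=
            mul_le_mul_of_nonneg_left (pow_le_pow_left₀ (by positivity) hv_ub _) (by positivity)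
      _ < (n:ℤ)^(6*k-6) * (a j:ℤ)^(2*k-2) := hmid
      _ = ((n:ℤ)^3 * a j)^(2*k-2) := by
          rw [mul_pow, ← pow_mul, show 3*(2*k-2) = 6*k-6 by omega]
      _ ≤ ((u j:ℤ)^k)^(2*k-2) := pow_le_pow_left₀ (by positivity) hu_lb _
    exact lt_of_pow_lt_pow_left₀ k (by positivity) step
  -- Real part
  have hkR : (0:ℝ) < (k:ℝ) := by positivity
  have hU : (0:ℝ) < (u j:ℝ) := by exact_mod_cast huj
  have hV : (0:ℝ) < (v j:ℝ) := by exact_mod_cast hvj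
  have hA1 : (0:ℝ) < (a 1:ℝ) := by exact_mod_cast hpos 1 (by omega) (by omega)
  have hA2 : (0:ℝ) < (a 2:ℝ) := by exact_mod_cast hpos 2 (by omega) (by omega)
  have hN : (0:ℝ) < (n:ℝ) := by exact_mod_cast hn
  have hA12 : (a 1:ℝ) < (a 2:ℝ) := by
    exact_mod_cast hmono 1 2 (by omega) (by omega) (by omega)
  have hUk : ((u j:ℝ))^k = (a 1:ℝ)*(a j:ℝ) - (n:ℝ) := by
    have := congrArg (fun z : ℤ => (z:ℝ)) hue'
    push_cast at this
    exact this
  have hVk : ((v j:ℝ))^k = (a 2:ℝ)*(a j:ℝ) - (n:ℝ) := by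
    have := congrArg (fun z : ℤ => (z:ℝ)) hve'
    push_cast at this
    exact this
  have hkeyR : (n:ℝ)^2 * ((v j:ℝ))^(2*k-3) < ((u j:ℝ))^(2*k-2) := by
    exact_mod_cast hkey
  set U := (u j : ℝ) with hUdef
  set V := (v j : ℝ) with hVdef
  set A1 := (a 1 : ℝ) with hA1def
  set A2 := (a 2 : ℝ) with hA2def
  set Aj := (a j : ℝ) with hAjdef
  set N := (n : ℝ) with hNdef
  have hVk' : (0:ℝ) < A2*Aj - N := by rw [← hVk]; positivity
  set α := (A1/A2) ^ ((1:ℝ)/(k:ℝ)) with hαdef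
  have hαpos : 0 < α := Real.rpow_pos_of_pos (div_pos hA1 hA2) _
  have hαk : α^k = A1/A2 := by
    rw [hαdef, ← Real.rpow_natCast ((A1/A2) ^ ((1:ℝ)/(k:ℝ))) k,
      ← Real.rpow_mul (div_pos hA1 hA2).le, one_div, inv_mul_cancel₀ (ne_of_gt hkR),
      Real.rpow_one]
  set t := U/V with htdef
  have htpos : 0 < t := div_pos hU hV
  have htk : t^k < α^k := by
    rw [hαk, htdef, div_pow, hUk, hVk, div_lt_div_iff₀ hVk' hA2]
    nlinarith [mul_pos hN (sub_pos.mpr hA12)]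
  have htα : t < α := lt_of_pow_lt_pow_left₀ k hαpos.le htk
  have h5 : (α - t)*t^(k-1) ≤ α^k - t^k := by
    have h51 : t^(k-1) ≤ α^(k-1) := pow_le_pow_left₀ htpos.le htα.le _
    have h52 : α*t^(k-1) ≤ α*α^(k-1) := mul_le_mul_of_nonneg_left h51 hαpos.le
    have h53 : α ^ k = α * α^(k-1) := by
      conv_lhs => rw [show k = (k-1)+1 by omega, pow_succ']
    have h54 : t ^ k = t * t^(k-1) := by
      conv_lhs => rw [show k = (k-1)+1 by omega, pow_succ']
    rw [sub_mul, h53, h54]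
    linarith
  have h6 : α^k - t^k < N/V^k := by
    rw [hαk, htdef, div_pow, hUk, hVk]
    rw [div_sub_div _ _ (ne_of_gt hA2) (ne_of_gt hVk'),
      div_lt_div_iff₀ (mul_pos hA2 hVk') hVk']
    nlinarith [mul_pos (mul_pos hN hA1) hVk']
  set W := V ^ ((k:ℝ) - 1/2) with hWdef
  have hWpos : 0 < W := Real.rpow_pos_of_pos hV _
  have hW2 : W^2 = V^(2*k-1) := by
    rw [hWdef, ← Real.rpow_natCast (V ^ ((k:ℝ) - 1/2)) 2, ← Real.rpow_mul hV.le,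
      ← Real.rpow_natCast V (2*k-1)]
    congr 1
    rw [Nat.cast_sub (by omega : 1 ≤ 2*k)]
    push_cast
    ring
  have e1 : (N*W*V^(k-1))^2 = (N^2*V^(2*k-3)) * V^(2*k) := by
    have em : V^(2*k-1) * V^(2*k-2) = V^(2*k-3) * V^(2*k) := by
      rw [← pow_add, ← pow_add]; congr 1; omega
    calc (N*W*V^(k-1))^2 = N^2 * W^2 * (V^(k-1))^2 := by ring
    _ = N^2 * V^(2*k-1) * V^(2*k-2) := by
        rw [hW2, ← pow_mul, show (k-1)*2 = 2*k-2 by omega]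
    _ = N^2 * (V^(2*k-1) * V^(2*k-2)) := by ring
    _ = N^2 * (V^(2*k-3) * V^(2*k)) := by rw [em]
    _ = (N^2*V^(2*k-3)) * V^(2*k) := by ring
  have e2 : (U^(k-1)*V^k)^2 = U^(2*k-2) * V^(2*k) := by
    rw [mul_pow, ← pow_mul, ← pow_mul, show (k-1)*2 = 2*k-2 by omega,
      show k*2 = 2*k by omega]
  have hsq : (N*W*V^(k-1))^2 < (U^(k-1)*V^k)^2 := by
    rw [e1, e2]
    exact mul_lt_mul_of_pos_right hkeyR (by positivity)
  have K1 : N*W*V^(k-1) < U^(k-1)*V^k := lt_of_pow_lt_pow_left₀ 2 (by positivity) hsq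
  have et : (1/W) * t^(k-1) = U^(k-1)/(W*V^(k-1)) := by
    rw [htdef, div_pow]
    field_simp
  have hfin0 : N / V^k ≤ (1/W)*t^(k-1) := by
    rw [et, div_le_div_iff₀ (by positivity) (by positivity)]
    calc N*(W*V^(k-1)) = N*W*V^(k-1) := by ring
    _ ≤ U^(k-1)*V^k := K1.le
  have hchain : (α - t) * t^(k-1) < (1/W) * t^(k-1) :=
    lt_of_le_of_lt h5 (lt_of_lt_of_le h6 hfin0)
  have hαt : α - t < 1/W := lt_of_mul_lt_mul_right hchain (pow_pos htpos _).le
  rw [abs_sub_comm, abs_of_pos (sub_pos.mpr htα)]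
  exact hαt
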